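/- Let v be a positive integer with v ≡ 2 or 8 (mod 24). Writing v = 2w, there exists a set T of 3-subsets of Z_v such that the multiset of differences ΔT equals Z_v \ {0, w} with each element appearing exactly once. (Existence half of the characterization of (Z_v, Z_2, 3, 1)-difference families.) -/

import Mathlib

/-- The multiset of differences of a triple (finite subset) of an abelian group. -/
def tripleDiffs {G : Type*} [AddCommGroup G] [DecidableEq G] (T : Finset G) : Multiset G :=
  ((T ×ˢ T).filter (fun p => p.1 ≠ p.2)).val.map (fun p => p.1 - p.2)

/-- The multiset of differences of a family of triples. -/
def famDiffs {G : Type*} [AddCommGroup G] [DecidableEq G] (F : Finset (Finset G)) : Multiset G :=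
  F.val.bind tripleDiffs

lemma tripleDiffs_eq {G : Type*} [AddCommGroup G] [DecidableEq G] (x y : G)
    (h0x : x ≠ 0) (h0y : y ≠ 0) (hxy : x ≠ y) :
    tripleDiffs ({0, x, y} : Finset G) = {x, y, -x, y - x, -y, x - y} := by
  have h1 : ¬ (0 = x) := fun h => h0x h.symm
  have h2 : ¬ (0 = y) := fun h => h0y h.symm
  have h3 : ¬ (x = y) := hxy
  have h4 : ¬ (y = x) := fun h => hxy h.symm
  have hval : ({0, x, y} : Finset G).val = 0 ::ₘ x ::ₘ y ::ₘ 0 := by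
    rw [Finset.insert_val, Finset.insert_val]
    rw [Multiset.ndinsert_of_notMem (by simp [h1, h2]),
        Multiset.ndinsert_of_notMem (by simp [h3])]
    rfl
  rw [tripleDiffs, Finset.filter_val, Finset.product_val, hval]
  simp only [Multiset.cons_product, Multiset.product_cons, Multiset.zero_product,
    Multiset.product_zero, Multiset.map_cons, Multiset.map_zero, add_zero,
    zero_add, Multiset.filter_add, Multiset.filter_cons, Multiset.filter_zero]
  simp [h1, h2, h3, h4, h0x, h0y]
  simp only [← Multiset.singleton_add]
  abel


lemma cnt_inc1 (a L x : ℕ) :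
    Multiset.count x ((Multiset.range L).map (fun k => a + k))
      = if a ≤ x ∧ x < a + L then 1 else 0 := by
  induction L with
  | zero => simp only [Multiset.range_zero, Multiset.map_zero, Multiset.count_zero]; split_ifs <;> omega
  | succ m ih =>
    rw [Multiset.range_succ, Multiset.map_cons, Multiset.count_cons, ih]
    split_ifs <;> omega

lemma cnt_inc2 (a L x : ℕ) :
    Multiset.count x ((Multiset.range L).map (fun k => a + 2 * k))
      = if a ≤ x ∧ x < a + 2 * L ∧ 2 ∣ (x - a) then 1 else 0 := by
  induction L with
  | zero => simp only [Multiset.range_zero, Multiset.map_zero, Multiset.count_zero]; split_ifs <;> omega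
  | succ m ih =>
    rw [Multiset.range_succ, Multiset.map_cons, Multiset.count_cons, ih]
    split_ifs <;> omega

lemma cnt_dec1 (c L x : ℕ) (h : L ≤ c + 1) :
    Multiset.count x ((Multiset.range L).map (fun k => c - k))
      = if x ≤ c ∧ c < x + L then 1 else 0 := by
  induction L with
  | zero => simp only [Multiset.range_zero, Multiset.map_zero, Multiset.count_zero]; split_ifs <;> omega
  | succ m ih =>
    rw [Multiset.range_succ, Multiset.map_cons, Multiset.count_cons, ih (by omega)]
    split_ifs <;> omega

lemma cnt_dec2 (c L x : ℕ) (h : 2 * L ≤ c + 2) :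
    Multiset.count x ((Multiset.range L).map (fun k => c - 2 * k))
      = if x ≤ c ∧ c < x + 2 * L ∧ 2 ∣ (c - x) then 1 else 0 := by
  induction L with
  | zero => simp only [Multiset.range_zero, Multiset.map_zero, Multiset.count_zero]; split_ifs <;> omega
  | succ m ih =>
    rw [Multiset.range_succ, Multiset.map_cons, Multiset.count_cons, ih (by omega)]
    split_ifs <;> omega

lemma cnt_inc1E (a L x : ℕ) :
    ∃ b, Multiset.count x ((Multiset.range L).map (fun k => a + k)) = b ∧ b ≤ 1 ∧
      (b = 1 ↔ (a ≤ x ∧ x < a + L)) :=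
  ⟨_, cnt_inc1 a L x, by split_ifs <;> omega, by split_ifs with h <;> simp [h]⟩

lemma cnt_inc2E (a L x : ℕ) :
    ∃ b, Multiset.count x ((Multiset.range L).map (fun k => a + 2 * k)) = b ∧ b ≤ 1 ∧
      (b = 1 ↔ (a ≤ x ∧ x < a + 2 * L ∧ 2 ∣ (x - a))) :=
  ⟨_, cnt_inc2 a L x, by split_ifs <;> omega, by split_ifs with h <;> simp [h]⟩

lemma cnt_dec1E (c L x : ℕ) (h : L ≤ c + 1) :
    ∃ b, Multiset.count x ((Multiset.range L).map (fun k => c - k)) = b ∧ b ≤ 1 ∧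
      (b = 1 ↔ (x ≤ c ∧ c < x + L)) :=
  ⟨_, cnt_dec1 c L x h, by split_ifs <;> omega, by split_ifs with h' <;> simp [h']⟩

lemma cnt_dec2E (c L x : ℕ) (h : 2 * L ≤ c + 2) :
    ∃ b, Multiset.count x ((Multiset.range L).map (fun k => c - 2 * k)) = b ∧ b ≤ 1 ∧
      (b = 1 ↔ (x ≤ c ∧ c < x + 2 * L ∧ 2 ∣ (c - x))) :=
  ⟨_, cnt_dec2 c L x h, by split_ifs <;> omega, by split_ifs with h' <;> simp [h']⟩

def S0 (m : ℕ) : Multiset (ℕ × ℕ × ℕ) :=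
  (Multiset.range (2*m-1)).map (fun k => (4+2*k, 10*m-2-k, 10*m+2+k)) +
  (Multiset.range (m-1)).map (fun k => (4*m-3-2*k, 4*m+1+k, 8*m-2-k)) +
  (Multiset.range (m-2)).map (fun k => (2*m-3-2*k, 5*m+2+k, 7*m-1-k)) +
  (Multiset.range 1).map (fun k => (2+k, 10*m-1+k, 10*m+1+2*k)) +
  (Multiset.range 1).map (fun k => (4*m-1+k, 6*m+1+k, 10*m+2*k)) +
  (Multiset.range 1).map (fun k => (2*m-1+k, 6*m+k, 8*m-1+2*k)) +
  (Multiset.range 1).map (fun k => (1+k, 5*m+k, 5*m+1+2*k))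

def S1 (m : ℕ) : Multiset (ℕ × ℕ × ℕ) :=
  (Multiset.range (2*m)).map (fun k => (4*m-2*k, 4*m+2+k, 8*m+2-k)) +
  (Multiset.range m).map (fun k => (4*m-1-2*k, 8*m+3+k, 12*m+2-k)) +
  (Multiset.range (m-2)).map (fun k => (2*m-3-2*k, 9*m+5+k, 11*m+2-k)) +
  (Multiset.range 1).map (fun k => (4*m+1+k, 6*m+2+k, 10*m+3+2*k)) +
  (Multiset.range 1).map (fun k => (2*m-1+k, 10*m+4+k, 12*m+3+2*k)) +
  (Multiset.range 1).map (fun k => (1+k, 9*m+3+k, 9*m+4+2*k))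

lemma hS_S0 (m : ℕ) (hm : 2 ≤ m) :
    ∀ t ∈ S0 m, t.2.2 = t.1 + t.2.1 ∧ 1 ≤ t.1 ∧ t.1 < t.2.1 := by
  intro t ht
  simp only [S0, Multiset.mem_add, Multiset.mem_map, Multiset.mem_range] at ht
  rcases ht with ((((((⟨k,hk,rfl⟩|⟨k,hk,rfl⟩)|⟨k,hk,rfl⟩)|⟨k,hk,rfl⟩)|⟨k,hk,rfl⟩)|⟨k,hk,rfl⟩)|⟨k,hk,rfl⟩) <;>
    refine ⟨?_, ?_, ?_⟩ <;> (dsimp only; omega)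

lemma hS_S1 (m : ℕ) (hm : 2 ≤ m) :
    ∀ t ∈ S1 m, t.2.2 = t.1 + t.2.1 ∧ 1 ≤ t.1 ∧ t.1 < t.2.1 := by
  intro t ht
  simp only [S1, Multiset.mem_add, Multiset.mem_map, Multiset.mem_range] at ht
  rcases ht with (((((⟨k,hk,rfl⟩|⟨k,hk,rfl⟩)|⟨k,hk,rfl⟩)|⟨k,hk,rfl⟩)|⟨k,hk,rfl⟩)|⟨k,hk,rfl⟩) <;>
    refine ⟨?_, ?_, ?_⟩ <;> (dsimp only; omega)


lemma reduction (v n : ℕ) [NeZero v] (hv : v = 6*n+2) (S : Multiset (ℕ × ℕ × ℕ))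
    (hS : ∀ t ∈ S, t.2.2 = t.1 + t.2.1 ∧ 1 ≤ t.1 ∧ t.1 < t.2.1)
    (hvals : S.bind (fun t => ({t.1, t.2.1, t.2.2} : Multiset ℕ)) = (Finset.Icc 1 (3*n)).val) :
    ∃ T : Finset (Finset (ZMod v)), (∀ t ∈ T, t.card = 3) ∧
      famDiffs T = (Finset.univ \ {(0 : ZMod v), ((v / 2 : ℕ) : ZMod v)}).val := by
  set f : ℕ × ℕ × ℕ → Multiset ℕ := fun t => ({t.1, t.2.1, t.2.2} : Multiset ℕ) with hf
  -- basic facts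
  have hbound : ∀ t ∈ S, ∀ y ∈ f t, 1 ≤ y ∧ y ≤ 3*n := by
    intro t ht y hy
    have : y ∈ S.bind f := Multiset.mem_bind.mpr ⟨t, ht, hy⟩
    rw [hvals, Finset.mem_val, Finset.mem_Icc] at this
    exact this
  have hbn : (S.bind f).Nodup := by rw [hvals]; exact (Finset.Icc 1 (3*n)).nodup
  rw [Multiset.nodup_bind] at hbn
  obtain ⟨hnode, hdisj⟩ := hbn
  have hdisj' : ∀ t ∈ S, ∀ t' ∈ S, t ≠ t' → Disjoint (f t) (f t') :=
    fun t ht t' ht' hne => by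
      haveI : Std.Symm (Function.onFun Disjoint f) := ⟨fun _ _ h => Disjoint.symm h⟩
      exact Multiset.Pairwise.forall hdisj ht ht' hne
  -- cast injectivity facts
  have hcinj : ∀ x y : ℕ, x ≤ 6*n+1 → y ≤ 6*n+1 → ((x : ZMod v) = (y : ZMod v)) → x = y := by
    intro x y hx hy h
    have hx' := ZMod.val_cast_of_lt (a := x) (n := v) (by omega)
    have hy' := ZMod.val_cast_of_lt (a := y) (n := v) (by omega)
    rw [← hx', ← hy', h]
  have hc0 : ∀ x : ℕ, 1 ≤ x → x ≤ 6*n+1 → ((x : ZMod v) ≠ 0) := by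
    intro x h1 h2 h
    have := ZMod.val_cast_of_lt (a := x) (n := v) (by omega)
    rw [h, ZMod.val_zero] at this
    omega
  -- the map to triples in ZMod v
  set g : ℕ × ℕ × ℕ → Finset (ZMod v) :=
    fun t => ({0, (t.1 : ZMod v), (t.2.2 : ZMod v)} : Finset (ZMod v)) with hg
  have hfmem : ∀ t : ℕ × ℕ × ℕ, t.1 ∈ f t ∧ t.2.1 ∈ f t ∧ t.2.2 ∈ f t := by
    intro t; refine ⟨?_, ?_, ?_⟩ <;> simp [hf]
  have habc : ∀ t ∈ S, t.2.2 = t.1 + t.2.1 ∧ 1 ≤ t.1 ∧ t.1 < t.2.1 ∧ t.2.1 < t.2.2 ∧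
      t.2.2 ≤ 3*n := by
    intro t ht
    obtain ⟨h1, h2, h3⟩ := hS t ht
    have := (hbound t ht t.2.2 (hfmem t).2.2).2
    omega
  have hSnodup : S.Nodup := by
    obtain ⟨l, rfl, hp⟩ := hdisj
    rw [Multiset.coe_nodup]
    refine hp.imp ?_
    intro a b hab
    intro h; subst h
    rw [Function.onFun, disjoint_self] at hab
    have := (hfmem a).1
    rw [hab] at this
    simp at this
  have hginj : ∀ t ∈ S, ∀ t' ∈ S, g t = g t' → t = t' := by
    intro t ht t' ht' heq
    by_contra hne
    have hd := hdisj' t ht t' ht' hne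
    obtain ⟨e1, e2, e3, e4, e5⟩ := habc t ht
    obtain ⟨e1', e2', e3', e4', e5'⟩ := habc t' ht'
    have hmem : (t.1 : ZMod v) ∈ g t' := by
      rw [← heq, hg]; simp
    rw [hg] at hmem
    simp only [Finset.mem_insert, Finset.mem_singleton] at hmem
    have hnd : ∀ {a : ℕ}, a ∈ f t → a ∉ f t' := fun ha => Multiset.disjoint_left.mp hd ha
    rcases hmem with h | h | h
    · exact hc0 t.1 (by omega) (by omega) h
    · have := hcinj t.1 t'.1 (by omega) (by omega) h
      exact hnd (hfmem t).1 (this ▸ (hfmem t').1)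
    · have := hcinj t.1 t'.2.2 (by omega) (by omega) h
      exact hnd (hfmem t).1 (this ▸ (hfmem t').2.2)
  have hgnodup : (S.map g).Nodup := hSnodup.map_on hginj
  refine ⟨⟨S.map g, hgnodup⟩, ?_, ?_⟩
  · intro u hu
    rw [Finset.mem_mk, Multiset.mem_map] at hu
    obtain ⟨t, ht, rfl⟩ := hu
    obtain ⟨e1, e2, e3, e4, e5⟩ := habc t ht
    have n1 : (t.1 : ZMod v) ≠ 0 := hc0 t.1 (by omega) (by omega)
    have n2 : (t.2.2 : ZMod v) ≠ 0 := hc0 t.2.2 (by omega) (by omega)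
    have n3 : (t.1 : ZMod v) ≠ (t.2.2 : ZMod v) := by
      intro h; have := hcinj t.1 t.2.2 (by omega) (by omega) h; omega
    rw [hg]
    rw [Finset.card_insert_of_notMem (by simp [n1.symm, n2.symm]),
        Finset.card_insert_of_notMem (by simp [n3]), Finset.card_singleton]
  · have hv2 : v / 2 = 3*n+1 := by omega
    set w : ℕ → ℕ := fun y => v - y with hw
    have hstep1 : famDiffs (⟨S.map g, hgnodup⟩ : Finset (Finset (ZMod v)))
        = S.bind (fun t => tripleDiffs (g t)) := Multiset.bind_map S tripleDiffs g
    have hstep2 : ∀ t ∈ S, tripleDiffs (g t)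
        = (f t + (f t).map w).map (Nat.cast : ℕ → ZMod v) := by
      intro t ht
      obtain ⟨e1, e2, e3, e4, e5⟩ := habc t ht
      have n1 : (t.1 : ZMod v) ≠ 0 := hc0 t.1 (by omega) (by omega)
      have n2 : (t.2.2 : ZMod v) ≠ 0 := hc0 t.2.2 (by omega) (by omega)
      have n3 : (t.1 : ZMod v) ≠ (t.2.2 : ZMod v) := by
        intro h; have := hcinj t.1 t.2.2 (by omega) (by omega) h; omega
      have hwa : ∀ x : ℕ, x ≤ 3*n → ((w x : ℕ) : ZMod v) = -(x : ZMod v) := by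
        intro x hx
        rw [hw]
        simp only []
        rw [Nat.cast_sub (by omega), ZMod.natCast_self]
        ring
      have hb : ((t.2.1 : ℕ) : ZMod v) = (t.2.2 : ZMod v) - (t.1 : ZMod v) := by
        have h := e1
        rw [h]; push_cast; ring
      rw [hg]
      simp only []
      rw [tripleDiffs_eq (t.1 : ZMod v) (t.2.2 : ZMod v) n1 n2 n3]
      rw [hf]
      simp only [Multiset.insert_eq_cons, Multiset.map_cons, Multiset.cons_add,
        Multiset.map_singleton, Multiset.singleton_add]
      rw [hwa t.1 (by omega), hwa t.2.1 (by omega), hwa t.2.2 (by omega), hb]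
      simp only [← Multiset.singleton_add, neg_sub]
      abel
    have hstep3 : famDiffs (⟨S.map g, hgnodup⟩ : Finset (Finset (ZMod v)))
        = ((Finset.Icc 1 (3*n)).val + ((Finset.Icc 1 (3*n)).val).map w).map
            (Nat.cast : ℕ → ZMod v) := by
      rw [hstep1, Multiset.bind_congr hstep2, ← Multiset.map_bind, Multiset.bind_add,
        ← Multiset.map_bind, hvals]
    rw [hstep3]
    have himg : (Finset.Icc 1 (3*n)).val.map w = (Finset.Icc (3*n+2) (6*n+1)).val := by
      have hio : Set.InjOn w (Finset.Icc 1 (3*n)) := by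
        intro x hx y hy hxy
        simp only [Finset.coe_Icc, Set.mem_Icc] at hx hy
        rw [hw] at hxy; simp only [] at hxy; omega
      rw [← Finset.image_val_of_injOn hio]
      congr 1
      ext y
      simp only [Finset.mem_image, Finset.mem_Icc]
      constructor
      · rintro ⟨x, hx, rfl⟩; rw [hw]; simp only []; omega
      · intro hy; exact ⟨v - y, by omega, by rw [hw]; simp only []; omega⟩
    rw [himg]
    set N : Multiset ℕ := (Finset.Icc 1 (3*n)).val + (Finset.Icc (3*n+2) (6*n+1)).val with hN
    have hNmem : ∀ y ∈ N, 1 ≤ y ∧ y ≤ 6*n+1 ∧ y ≠ 3*n+1 := by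
      intro y hy
      rw [hN, Multiset.mem_add, Finset.mem_val, Finset.mem_val, Finset.mem_Icc,
        Finset.mem_Icc] at hy
      omega
    have hNnodup : N.Nodup := by
      rw [hN]
      refine Multiset.nodup_add.mpr ⟨Finset.nodup _, Finset.nodup _, ?_⟩
      rw [Multiset.disjoint_left]
      intro a ha hb
      rw [Finset.mem_val, Finset.mem_Icc] at ha hb
      omega
    have hMnodup : (N.map (Nat.cast : ℕ → ZMod v)).Nodup := by
      refine hNnodup.map_on ?_
      intro x hx y hy h
      exact hcinj x y (by have := hNmem x hx; omega) (by have := hNmem y hy; omega) h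
    have hsub : ∀ z ∈ N.map (Nat.cast : ℕ → ZMod v),
        z ∈ (Finset.univ \ {(0 : ZMod v), ((v / 2 : ℕ) : ZMod v)}).val := by
      intro z hz
      rw [Multiset.mem_map] at hz
      obtain ⟨y, hy, rfl⟩ := hz
      obtain ⟨hy1, hy2, hy3⟩ := hNmem y hy
      rw [Finset.mem_val, Finset.mem_sdiff]
      refine ⟨Finset.mem_univ _, ?_⟩
      rw [hv2]
      simp only [Finset.mem_insert, Finset.mem_singleton]
      push_neg
      refine ⟨hc0 y (by omega) (by omega), ?_⟩
      intro h
      exact hy3 (hcinj y (3*n+1) (by omega) (by omega) h)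
    have hle : N.map (Nat.cast : ℕ → ZMod v)
        ≤ (Finset.univ \ {(0 : ZMod v), ((v / 2 : ℕ) : ZMod v)}).val :=
      (Multiset.le_iff_subset hMnodup).mpr hsub
    refine Multiset.eq_of_le_of_card_le hle ?_
    have hz0 : ((0:ZMod v) : ZMod v) ∉ ({((v / 2 : ℕ) : ZMod v)} : Finset (ZMod v)) := by
      rw [hv2, Finset.mem_singleton]
      exact fun h => hc0 (3*n+1) (by omega) (by omega) h.symm
    have hcard2 : ({(0 : ZMod v), ((v / 2 : ℕ) : ZMod v)} : Finset (ZMod v)).card = 2 := by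
      rw [Finset.card_insert_of_notMem hz0, Finset.card_singleton]
    have hcardsd : (Finset.univ \ {(0 : ZMod v), ((v / 2 : ℕ) : ZMod v)}).card = v - 2 := by
      rw [Finset.card_sdiff_of_subset (Finset.subset_univ _), hcard2, Finset.card_univ, ZMod.card v]
    have : Multiset.card ((Finset.univ \ {(0 : ZMod v), ((v / 2 : ℕ) : ZMod v)}).val)
        = v - 2 := hcardsd
    rw [this, Multiset.card_map, hN, Multiset.card_add]
    have c1 : Multiset.card ((Finset.Icc 1 (3*n)).val) = 3*n := by
      rw [show Multiset.card ((Finset.Icc 1 (3*n)).val) = (Finset.Icc 1 (3*n)).card from rfl,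
        Nat.card_Icc]
      omega
    have c2 : Multiset.card ((Finset.Icc (3*n+2) (6*n+1)).val) = 3*n := by
      rw [show Multiset.card ((Finset.Icc (3*n+2) (6*n+1)).val)
            = (Finset.Icc (3*n+2) (6*n+1)).card from rfl, Nat.card_Icc]
      omega
    rw [c1, c2]
    omega

set_option maxHeartbeats 1600000 in
lemma hvals_S0 (m : ℕ) (hm : 2 ≤ m) :
    (S0 m).bind (fun t => ({t.1, t.2.1, t.2.2} : Multiset ℕ)) = (Finset.Icc 1 (3*(4*m))).val := by
  have hR : ∀ x : ℕ, Multiset.count x ((Finset.Icc 1 (3*(4*m))).val)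
      = if 1 ≤ x ∧ x ≤ 3*(4*m) then 1 else 0 := by
    intro x
    rw [Multiset.count_eq_of_nodup (Finset.Icc 1 (3*(4*m))).nodup]
    simp only [Finset.mem_val, Finset.mem_Icc]
  rw [Multiset.ext]
  intro x
  rw [hR x]
  simp only [S0, Multiset.add_bind, Multiset.bind_map, Multiset.insert_eq_cons,
    Multiset.bind_cons, Multiset.bind_singleton, Multiset.map_add, Multiset.map_map,
    Function.comp_def, Multiset.count_add]
  obtain ⟨a1, ea1, la1, ia1⟩ := cnt_inc2E (4) (2*m-1) x
  obtain ⟨a2, ea2, la2, ia2⟩ := cnt_dec2E (4*m-3) (m-1) x (by omega)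
  obtain ⟨a3, ea3, la3, ia3⟩ := cnt_dec2E (2*m-3) (m-2) x (by omega)
  obtain ⟨a4, ea4, la4, ia4⟩ := cnt_inc1E (2) (1) x
  obtain ⟨a5, ea5, la5, ia5⟩ := cnt_inc1E (4*m-1) (1) x
  obtain ⟨a6, ea6, la6, ia6⟩ := cnt_inc1E (2*m-1) (1) x
  obtain ⟨a7, ea7, la7, ia7⟩ := cnt_inc1E (1) (1) x
  obtain ⟨b1, eb1, lb1, ib1⟩ := cnt_dec1E (10*m-2) (2*m-1) x (by omega)
  obtain ⟨b2, eb2, lb2, ib2⟩ := cnt_inc1E (4*m+1) (m-1) x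
  obtain ⟨b3, eb3, lb3, ib3⟩ := cnt_inc1E (5*m+2) (m-2) x
  obtain ⟨b4, eb4, lb4, ib4⟩ := cnt_inc1E (10*m-1) (1) x
  obtain ⟨b5, eb5, lb5, ib5⟩ := cnt_inc1E (6*m+1) (1) x
  obtain ⟨b6, eb6, lb6, ib6⟩ := cnt_inc1E (6*m) (1) x
  obtain ⟨b7, eb7, lb7, ib7⟩ := cnt_inc1E (5*m) (1) x
  obtain ⟨c1, ec1, lc1, ic1⟩ := cnt_inc1E (10*m+2) (2*m-1) x
  obtain ⟨c2, ec2, lc2, ic2⟩ := cnt_dec1E (8*m-2) (m-1) x (by omega)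
  obtain ⟨c3, ec3, lc3, ic3⟩ := cnt_dec1E (7*m-1) (m-2) x (by omega)
  obtain ⟨c4, ec4, lc4, ic4⟩ := cnt_inc2E (10*m+1) (1) x
  obtain ⟨c5, ec5, lc5, ic5⟩ := cnt_inc2E (10*m) (1) x
  obtain ⟨c6, ec6, lc6, ic6⟩ := cnt_inc2E (8*m-1) (1) x
  obtain ⟨c7, ec7, lc7, ic7⟩ := cnt_inc2E (5*m+1) (1) x
  rw [ea1, ea2, ea3, ea4, ea5, ea6, ea7, eb1, eb2, eb3, eb4, eb5, eb6, eb7, ec1, ec2, ec3, ec4, ec5, ec6, ec7]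
  clear ea1 ea2 ea3 ea4 ea5 ea6 ea7 eb1 eb2 eb3 eb4 eb5 eb6 eb7 ec1 ec2 ec3 ec4 ec5 ec6 ec7
  have M0 : (a7 + a4) ≤ 1 ∧ ((a7 + a4) = 1 ↔ (1 ≤ x ∧ x ≤ 2)) := by
    clear ia1 la1 ia2 la2 ia3 la3 ia5 la5 ia6 la6 ib1 lb1 ib2 lb2 ib3 lb3 ib4 lb4 ib5 lb5 ib6 lb6 ib7 lb7 ic1 lc1 ic2 lc2 ic3 lc3 ic4 lc4 ic5 lc5 ic6 lc6 ic7 lc7 hR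
    omega
  have M1 : (a1) ≤ 1 ∧ ((a1) = 1 ↔ (4 ≤ x ∧ x ≤ 4*m ∧ 2 ∣ x)) := by
    clear ia2 la2 ia3 la3 ia4 la4 ia5 la5 ia6 la6 ia7 la7 ib1 lb1 ib2 lb2 ib3 lb3 ib4 lb4 ib5 lb5 ib6 lb6 ib7 lb7 ic1 lc1 ic2 lc2 ic3 lc3 ic4 lc4 ic5 lc5 ic6 lc6 ic7 lc7 M0 hR
    omega
  have M2 : (a6 + a3) ≤ 1 ∧ ((a6 + a3) = 1 ↔ (3 ≤ x ∧ x ≤ 2*m-1 ∧ ¬(2 ∣ x))) := by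
    clear ia1 la1 ia2 la2 ia4 la4 ia5 la5 ia7 la7 ib1 lb1 ib2 lb2 ib3 lb3 ib4 lb4 ib5 lb5 ib6 lb6 ib7 lb7 ic1 lc1 ic2 lc2 ic3 lc3 ic4 lc4 ic5 lc5 ic6 lc6 ic7 lc7 M0 M1 hR
    omega
  have M3 : (a5 + a2) ≤ 1 ∧ ((a5 + a2) = 1 ↔ (2*m+1 ≤ x ∧ x ≤ 4*m-1 ∧ ¬(2 ∣ x))) := by
    clear ia1 la1 ia3 la3 ia4 la4 ia6 la6 ia7 la7 ib1 lb1 ib2 lb2 ib3 lb3 ib4 lb4 ib5 lb5 ib6 lb6 ib7 lb7 ic1 lc1 ic2 lc2 ic3 lc3 ic4 lc4 ic5 lc5 ic6 lc6 ic7 lc7 M0 M1 M2 hR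
    omega
  have M4 : (b2) ≤ 1 ∧ ((b2) = 1 ↔ (4*m+1 ≤ x ∧ x ≤ 5*m-1)) := by
    clear ia1 la1 ia2 la2 ia3 la3 ia4 la4 ia5 la5 ia6 la6 ia7 la7 ib1 lb1 ib3 lb3 ib4 lb4 ib5 lb5 ib6 lb6 ib7 lb7 ic1 lc1 ic2 lc2 ic3 lc3 ic4 lc4 ic5 lc5 ic6 lc6 ic7 lc7 M0 M1 M2 M3 hR
    omega
  have M5 : (b7 + c7 + b3 + b6 + b5) ≤ 1 ∧ ((b7 + c7 + b3 + b6 + b5) = 1 ↔ (5*m ≤ x ∧ x ≤ 6*m+1)) := by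
    clear ia1 la1 ia2 la2 ia3 la3 ia4 la4 ia5 la5 ia6 la6 ia7 la7 ib1 lb1 ib2 lb2 ib4 lb4 ic1 lc1 ic2 lc2 ic3 lc3 ic4 lc4 ic5 lc5 ic6 lc6 M0 M1 M2 M3 M4 hR
    omega
  have M6 : (c3) ≤ 1 ∧ ((c3) = 1 ↔ (6*m+2 ≤ x ∧ x ≤ 7*m-1)) := by
    clear ia1 la1 ia2 la2 ia3 la3 ia4 la4 ia5 la5 ia6 la6 ia7 la7 ib1 lb1 ib2 lb2 ib3 lb3 ib4 lb4 ib5 lb5 ib6 lb6 ib7 lb7 ic1 lc1 ic2 lc2 ic4 lc4 ic5 lc5 ic6 lc6 ic7 lc7 M0 M1 M2 M3 M4 M5 hR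
    omega
  have M7 : (c2 + c6) ≤ 1 ∧ ((c2 + c6) = 1 ↔ (7*m ≤ x ∧ x ≤ 8*m-1)) := by
    clear ia1 la1 ia2 la2 ia3 la3 ia4 la4 ia5 la5 ia6 la6 ia7 la7 ib1 lb1 ib2 lb2 ib3 lb3 ib4 lb4 ib5 lb5 ib6 lb6 ib7 lb7 ic1 lc1 ic3 lc3 ic4 lc4 ic5 lc5 ic7 lc7 M0 M1 M2 M3 M4 M5 M6 hR
    omega
  have M8 : (b1) ≤ 1 ∧ ((b1) = 1 ↔ (8*m ≤ x ∧ x ≤ 10*m-2)) := by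
    clear ia1 la1 ia2 la2 ia3 la3 ia4 la4 ia5 la5 ia6 la6 ia7 la7 ib2 lb2 ib3 lb3 ib4 lb4 ib5 lb5 ib6 lb6 ib7 lb7 ic1 lc1 ic2 lc2 ic3 lc3 ic4 lc4 ic5 lc5 ic6 lc6 ic7 lc7 M0 M1 M2 M3 M4 M5 M6 M7 hR
    omega
  have M9 : (b4 + c5 + c4 + c1) ≤ 1 ∧ ((b4 + c5 + c4 + c1) = 1 ↔ (10*m-1 ≤ x ∧ x ≤ 12*m)) := by
    clear ia1 la1 ia2 la2 ia3 la3 ia4 la4 ia5 la5 ia6 la6 ia7 la7 ib1 lb1 ib2 lb2 ib3 lb3 ib5 lb5 ib6 lb6 ib7 lb7 ic2 lc2 ic3 lc3 ic6 lc6 ic7 lc7 M0 M1 M2 M3 M4 M5 M6 M7 M8 hR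
    omega
  clear ia1 ia2 ia3 ia4 ia5 ia6 ia7 ib1 ib2 ib3 ib4 ib5 ib6 ib7 ic1 ic2 ic3 ic4 ic5 ic6 ic7 la1 la2 la3 la4 la5 la6 la7 lb1 lb2 lb3 lb4 lb5 lb6 lb7 lc1 lc2 lc3 lc4 lc5 lc6 lc7
  split_ifs <;> omega

set_option maxHeartbeats 1600000 in
lemma hvals_S1 (m : ℕ) (hm : 2 ≤ m) :
    (S1 m).bind (fun t => ({t.1, t.2.1, t.2.2} : Multiset ℕ)) = (Finset.Icc 1 (3*(4*m+1))).val := by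
  have hR : ∀ x : ℕ, Multiset.count x ((Finset.Icc 1 (3*(4*m+1))).val)
      = if 1 ≤ x ∧ x ≤ 3*(4*m+1) then 1 else 0 := by
    intro x
    rw [Multiset.count_eq_of_nodup (Finset.Icc 1 (3*(4*m+1))).nodup]
    simp only [Finset.mem_val, Finset.mem_Icc]
  rw [Multiset.ext]
  intro x
  rw [hR x]
  simp only [S1, Multiset.add_bind, Multiset.bind_map, Multiset.insert_eq_cons,
    Multiset.bind_cons, Multiset.bind_singleton, Multiset.map_add, Multiset.map_map,
    Function.comp_def, Multiset.count_add]
  obtain ⟨a1, ea1, la1, ia1⟩ := cnt_dec2E (4*m) (2*m) x (by omega)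
  obtain ⟨a2, ea2, la2, ia2⟩ := cnt_dec2E (4*m-1) (m) x (by omega)
  obtain ⟨a3, ea3, la3, ia3⟩ := cnt_dec2E (2*m-3) (m-2) x (by omega)
  obtain ⟨a4, ea4, la4, ia4⟩ := cnt_inc1E (4*m+1) (1) x
  obtain ⟨a5, ea5, la5, ia5⟩ := cnt_inc1E (2*m-1) (1) x
  obtain ⟨a6, ea6, la6, ia6⟩ := cnt_inc1E (1) (1) x
  obtain ⟨b1, eb1, lb1, ib1⟩ := cnt_inc1E (4*m+2) (2*m) x
  obtain ⟨b2, eb2, lb2, ib2⟩ := cnt_inc1E (8*m+3) (m) x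
  obtain ⟨b3, eb3, lb3, ib3⟩ := cnt_inc1E (9*m+5) (m-2) x
  obtain ⟨b4, eb4, lb4, ib4⟩ := cnt_inc1E (6*m+2) (1) x
  obtain ⟨b5, eb5, lb5, ib5⟩ := cnt_inc1E (10*m+4) (1) x
  obtain ⟨b6, eb6, lb6, ib6⟩ := cnt_inc1E (9*m+3) (1) x
  obtain ⟨c1, ec1, lc1, ic1⟩ := cnt_dec1E (8*m+2) (2*m) x (by omega)
  obtain ⟨c2, ec2, lc2, ic2⟩ := cnt_dec1E (12*m+2) (m) x (by omega)
  obtain ⟨c3, ec3, lc3, ic3⟩ := cnt_dec1E (11*m+2) (m-2) x (by omega)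
  obtain ⟨c4, ec4, lc4, ic4⟩ := cnt_inc2E (10*m+3) (1) x
  obtain ⟨c5, ec5, lc5, ic5⟩ := cnt_inc2E (12*m+3) (1) x
  obtain ⟨c6, ec6, lc6, ic6⟩ := cnt_inc2E (9*m+4) (1) x
  rw [ea1, ea2, ea3, ea4, ea5, ea6, eb1, eb2, eb3, eb4, eb5, eb6, ec1, ec2, ec3, ec4, ec5, ec6]
  clear ea1 ea2 ea3 ea4 ea5 ea6 eb1 eb2 eb3 eb4 eb5 eb6 ec1 ec2 ec3 ec4 ec5 ec6
  have M0 : (a6 + a3 + a5) ≤ 1 ∧ ((a6 + a3 + a5) = 1 ↔ (1 ≤ x ∧ x ≤ 2*m-1 ∧ ¬(2 ∣ x))) := by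
    clear ia1 la1 ia2 la2 ia4 la4 ib1 lb1 ib2 lb2 ib3 lb3 ib4 lb4 ib5 lb5 ib6 lb6 ic1 lc1 ic2 lc2 ic3 lc3 ic4 lc4 ic5 lc5 ic6 lc6 hR
    omega
  have M1 : (a1) ≤ 1 ∧ ((a1) = 1 ↔ (2 ≤ x ∧ x ≤ 4*m ∧ 2 ∣ x)) := by
    clear ia2 la2 ia3 la3 ia4 la4 ia5 la5 ia6 la6 ib1 lb1 ib2 lb2 ib3 lb3 ib4 lb4 ib5 lb5 ib6 lb6 ic1 lc1 ic2 lc2 ic3 lc3 ic4 lc4 ic5 lc5 ic6 lc6 M0 hR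
    omega
  have M2 : (a2 + a4) ≤ 1 ∧ ((a2 + a4) = 1 ↔ (2*m+1 ≤ x ∧ x ≤ 4*m+1 ∧ ¬(2 ∣ x))) := by
    clear ia1 la1 ia3 la3 ia5 la5 ia6 la6 ib1 lb1 ib2 lb2 ib3 lb3 ib4 lb4 ib5 lb5 ib6 lb6 ic1 lc1 ic2 lc2 ic3 lc3 ic4 lc4 ic5 lc5 ic6 lc6 M0 M1 hR
    omega
  have M3 : (b1 + b4) ≤ 1 ∧ ((b1 + b4) = 1 ↔ (4*m+2 ≤ x ∧ x ≤ 6*m+2)) := by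
    clear ia1 la1 ia2 la2 ia3 la3 ia4 la4 ia5 la5 ia6 la6 ib2 lb2 ib3 lb3 ib5 lb5 ib6 lb6 ic1 lc1 ic2 lc2 ic3 lc3 ic4 lc4 ic5 lc5 ic6 lc6 M0 M1 M2 hR
    omega
  have M4 : (c1) ≤ 1 ∧ ((c1) = 1 ↔ (6*m+3 ≤ x ∧ x ≤ 8*m+2)) := by
    clear ia1 la1 ia2 la2 ia3 la3 ia4 la4 ia5 la5 ia6 la6 ib1 lb1 ib2 lb2 ib3 lb3 ib4 lb4 ib5 lb5 ib6 lb6 ic2 lc2 ic3 lc3 ic4 lc4 ic5 lc5 ic6 lc6 M0 M1 M2 M3 hR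
    omega
  have M5 : (b2 + b6 + c6) ≤ 1 ∧ ((b2 + b6 + c6) = 1 ↔ (8*m+3 ≤ x ∧ x ≤ 9*m+4)) := by
    clear ia1 la1 ia2 la2 ia3 la3 ia4 la4 ia5 la5 ia6 la6 ib1 lb1 ib3 lb3 ib4 lb4 ib5 lb5 ic1 lc1 ic2 lc2 ic3 lc3 ic4 lc4 ic5 lc5 M0 M1 M2 M3 M4 hR
    omega
  have M6 : (b3) ≤ 1 ∧ ((b3) = 1 ↔ (9*m+5 ≤ x ∧ x ≤ 10*m+2)) := by
    clear ia1 la1 ia2 la2 ia3 la3 ia4 la4 ia5 la5 ia6 la6 ib1 lb1 ib2 lb2 ib4 lb4 ib5 lb5 ib6 lb6 ic1 lc1 ic2 lc2 ic3 lc3 ic4 lc4 ic5 lc5 ic6 lc6 M0 M1 M2 M3 M4 M5 hR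
    omega
  have M7 : (c4 + b5 + c3) ≤ 1 ∧ ((c4 + b5 + c3) = 1 ↔ (10*m+3 ≤ x ∧ x ≤ 11*m+2)) := by
    clear ia1 la1 ia2 la2 ia3 la3 ia4 la4 ia5 la5 ia6 la6 ib1 lb1 ib2 lb2 ib3 lb3 ib4 lb4 ib6 lb6 ic1 lc1 ic2 lc2 ic5 lc5 ic6 lc6 M0 M1 M2 M3 M4 M5 M6 hR
    omega
  have M8 : (c2 + c5) ≤ 1 ∧ ((c2 + c5) = 1 ↔ (11*m+3 ≤ x ∧ x ≤ 12*m+3)) := by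
    clear ia1 la1 ia2 la2 ia3 la3 ia4 la4 ia5 la5 ia6 la6 ib1 lb1 ib2 lb2 ib3 lb3 ib4 lb4 ib5 lb5 ib6 lb6 ic1 lc1 ic3 lc3 ic4 lc4 ic6 lc6 M0 M1 M2 M3 M4 M5 M6 M7 hR
    omega
  clear ia1 ia2 ia3 ia4 ia5 ia6 ib1 ib2 ib3 ib4 ib5 ib6 ic1 ic2 ic3 ic4 ic5 ic6 la1 la2 la3 la4 la5 la6 lb1 lb2 lb3 lb4 lb5 lb6 lc1 lc2 lc3 lc4 lc5 lc6
  split_ifs <;> omega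


theorem stmt_10 (v : ℕ) [NeZero v] (hv : v % 24 = 2 ∨ v % 24 = 8) :
    ∃ T : Finset (Finset (ZMod v)), (∀ t ∈ T, t.card = 3) ∧
      famDiffs T = (Finset.univ \ {(0 : ZMod v), ((v / 2 : ℕ) : ZMod v)}).val := by
  obtain ⟨n, hv6, hcase⟩ : ∃ n, v = 6*n+2 ∧ (n = 0 ∨ n = 1 ∨ n = 4 ∨ n = 5 ∨
      (2 ≤ n/4 ∧ (n = 4*(n/4) ∨ n = 4*(n/4)+1))) := ⟨(v-2)/6, by omega⟩
  rcases hcase with h|h|h|h|⟨hm, h|h⟩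
  · subst h; exact reduction v 0 hv6 0 (by simp) (by decide)
  · subst h; exact reduction v 1 hv6 {(1,2,3)} (by decide) (by decide)
  · subst h
    exact reduction v 4 hv6 {(1,5,6),(2,8,10),(3,9,12),(4,7,11)} (by decide) (by decide)
  · subst h
    exact reduction v 5 hv6 {(5,6,11),(4,8,12),(3,10,13),(2,7,9),(1,14,15)} (by decide) (by decide)
  · exact reduction v (4*(n/4)) (by omega) (S0 (n/4)) (hS_S0 (n/4) hm) (hvals_S0 (n/4) hm)
  · exact reduction v (4*(n/4)+1) (by omega) (S1 (n/4)) (hS_S1 (n/4) hm) (hvals_S1 (n/4) hm)
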